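/- Let Ψ = span{x̃ᵢ − x̃ⱼ : i, j ∈ [n]} ⊆ ℝ^{n+d} and Θ = {β : Zᵀβ = 0} for a matrix Z ∈ ℝ^{(n+d)×(d+1)}. Assume Σ = Σ_{i>j}(x̃ᵢ − x̃ⱼ)(x̃ᵢ − x̃ⱼ)ᵀ satisfies zᵀΣz ≥ c₂n‖z‖₂² for all z ∈ Θ with c₂ > 0. Then for every β ∈ ℝ^{n+d} there exists v ∈ Ψ^⊥ such that β + v ∈ Θ. -/

import Mathlib

open Matrix

lemma dot_vmv {m : ℕ} (a z : Fin m → ℝ) :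
    z ⬝ᵥ (Matrix.vecMulVec a a).mulVec z = (z ⬝ᵥ a) * (a ⬝ᵥ z) := by
  simp only [Matrix.mulVec, Matrix.vecMulVec_apply, dotProduct, Finset.mul_sum,
    Finset.sum_mul, mul_assoc]
  rw [Finset.sum_comm]

lemma dot_sum' {ι k : Type*} [Fintype k] (s : Finset ι) (u : k → ℝ) (v : ι → k → ℝ) :
    u ⬝ᵥ (∑ i ∈ s, v i) = ∑ i ∈ s, u ⬝ᵥ v i := by
  simp only [dotProduct, Finset.sum_apply, Finset.mul_sum]
  rw [Finset.sum_comm]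

lemma sum_mulVec' {ι m k : Type*} [Fintype k] (s : Finset ι) (M : ι → Matrix m k ℝ)
    (z : k → ℝ) : (∑ i ∈ s, M i).mulVec z = ∑ i ∈ s, (M i).mulVec z := by
  ext j
  simp only [Matrix.mulVec, dotProduct, Finset.sum_apply, Matrix.sum_apply, Finset.sum_mul]
  rw [Finset.sum_comm]

set_option maxHeartbeats 1000000 in
/-- Identifiability: if `Σ = Σ_{i>j}(x̃ᵢ − x̃ⱼ)(x̃ᵢ − x̃ⱼ)ᵀ` is bounded below by `c₂n > 0` on
`Θ = {β : Zᵀβ = 0}`, then every `β` can be translated by some `v ∈ Ψ^⊥`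
(`Ψ = span{x̃ᵢ − x̃ⱼ}`) into `Θ`. -/
theorem stmt16 {n d : ℕ} (x : Fin n → Fin (n + d) → ℝ)
    (Z : Matrix (Fin (n + d)) (Fin (d + 1)) ℝ)
    (c₂ : ℝ) (hc₂ : 0 < c₂)
    (hSigma : ∀ z : Fin (n + d) → ℝ, Zᵀ.mulVec z = 0 →
      c₂ * n * (z ⬝ᵥ z) ≤
        z ⬝ᵥ (∑ p ∈ Finset.univ.filter (fun p : Fin n × Fin n => p.2 < p.1),
          Matrix.vecMulVec (x p.1 - x p.2) (x p.1 - x p.2)).mulVec z) :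
    ∀ β : Fin (n + d) → ℝ, ∃ v : Fin (n + d) → ℝ,
      (∀ u ∈ Submodule.span ℝ (Set.range fun p : Fin n × Fin n => x p.1 - x p.2),
        u ⬝ᵥ v = 0) ∧
      Zᵀ.mulVec (β + v) = 0 := by
  intro β
  rcases Nat.eq_zero_or_pos n with hn | hn
  · subst hn
    refine ⟨-β, ?_, ?_⟩
    · intro u hu
      have he : (Set.range fun p : Fin 0 × Fin 0 => x p.1 - x p.2) = ∅ :=
        Set.range_eq_empty _
      rw [he, Submodule.span_empty, Submodule.mem_bot] at hu
      simp [hu]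
    · simp
  · classical
    let Ψ : Submodule ℝ (EuclideanSpace ℝ (Fin (n + d))) :=
      Submodule.span ℝ (Set.range fun p : Fin n × Fin n =>
        (WithLp.toLp 2 (x p.1 - x p.2) : EuclideanSpace ℝ (Fin (n + d))))
    let f : EuclideanSpace ℝ (Fin (n + d)) →ₗ[ℝ] (Fin (d + 1) → ℝ) :=
      Zᵀ.mulVecLin ∘ₗ (EuclideanSpace.equiv (Fin (n + d)) ℝ).toLinearEquiv.toLinearMap
    have hfE : Module.finrank ℝ (EuclideanSpace ℝ (Fin (n + d))) = n + d := by
      simp [finrank_euclideanSpace]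
    -- trivial intersection
    have hinf : LinearMap.ker f ⊓ Ψᗮ = ⊥ := by
      rw [Submodule.eq_bot_iff]
      rintro z ⟨hzΘ, hzΨ⟩
      have hz0 : Zᵀ.mulVec z = 0 := hzΘ
      have horth : ∀ p : Fin n × Fin n, (x p.1 - x p.2) ⬝ᵥ z = 0 := by
        intro p
        have h := (Submodule.mem_orthogonal Ψ z).1 hzΨ _
          (Submodule.subset_span ⟨p, rfl⟩)
        simpa [PiLp.inner_apply, RCLike.inner_apply, dotProduct, mul_comm] using h
      have hle := hSigma z hz0
      have hrhs : z ⬝ᵥ (∑ p ∈ Finset.univ.filter (fun p : Fin n × Fin n => p.2 < p.1),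
          Matrix.vecMulVec (x p.1 - x p.2) (x p.1 - x p.2)).mulVec z = 0 := by
        rw [sum_mulVec', dot_sum']
        refine Finset.sum_eq_zero fun p _ => ?_
        rw [dot_vmv, horth p, mul_zero]
      rw [hrhs] at hle
      have hnn : (0:ℝ) ≤ z ⬝ᵥ z :=
        Finset.sum_nonneg fun i _ => mul_self_nonneg _
      have hpos : (0:ℝ) < c₂ * n := by positivity
      have hzz : z ⬝ᵥ z = 0 := by nlinarith
      have hz' := dotProduct_self_eq_zero.1 hzz
      ext i
      simpa using congrFun hz' i
    -- finrank of Ψ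
    set i0 : Fin n := ⟨0, hn⟩ with hi0
    let S : Finset (EuclideanSpace ℝ (Fin (n + d))) :=
      (Finset.univ.erase i0).image (fun i => (WithLp.toLp 2 (x i - x i0) : EuclideanSpace ℝ (Fin (n + d))))
    have hgen : ∀ i, (WithLp.toLp 2 (x i - x i0) : EuclideanSpace ℝ (Fin (n + d))) ∈
        Submodule.span ℝ (S : Set (EuclideanSpace ℝ (Fin (n + d)))) := by
      intro i
      by_cases h : i = i0
      · subst h
        simp
      · exact Submodule.subset_span (Finset.mem_coe.2 (Finset.mem_image.2
          ⟨i, Finset.mem_erase.2 ⟨h, Finset.mem_univ i⟩, rfl⟩))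
    have hΨle : Ψ ≤ Submodule.span ℝ (S : Set (EuclideanSpace ℝ (Fin (n + d)))) := by
      rw [Submodule.span_le]
      rintro _ ⟨p, rfl⟩
      show (WithLp.toLp 2 (x p.1 - x p.2) : EuclideanSpace ℝ (Fin (n + d))) ∈ _
      have heq : (WithLp.toLp 2 (x p.1 - x p.2) : EuclideanSpace ℝ (Fin (n + d)))
          = WithLp.toLp 2 (x p.1 - x i0) - WithLp.toLp 2 (x p.2 - x i0) := by
        rw [← WithLp.toLp_sub]; congr 1; abel
      rw [heq]
      exact Submodule.sub_mem _ (hgen p.1) (hgen p.2)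
    have hScard : S.card ≤ n - 1 := by
      refine le_trans Finset.card_image_le ?_
      simp [Finset.card_erase_of_mem]
    have hΨrank : Module.finrank ℝ Ψ ≤ n - 1 :=
      le_trans (Submodule.finrank_mono hΨle)
        (le_trans (finrank_span_finset_le_card S) hScard)
    -- finrank of ker f
    have hΘrank : n - 1 ≤ Module.finrank ℝ (LinearMap.ker f) := by
      have h1 := LinearMap.finrank_range_add_finrank_ker f
      rw [hfE] at h1
      have h2 : Module.finrank ℝ (LinearMap.range f) ≤ d + 1 := by
        refine le_trans (Submodule.finrank_le _) ?_
        simp [Module.finrank_pi]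
      omega
    -- orthogonal complement rank
    have hΨorth : Module.finrank ℝ Ψ + Module.finrank ℝ Ψᗮ = n + d := by
      have h := Submodule.finrank_add_finrank_orthogonal Ψ
      rw [hfE] at h
      exact h
    -- sup is top
    have hsup : LinearMap.ker f ⊔ Ψᗮ = ⊤ := by
      apply Submodule.eq_top_of_finrank_eq
      have h3 := Submodule.finrank_sup_add_finrank_inf_eq (LinearMap.ker f) Ψᗮ
      rw [hinf] at h3
      simp only [finrank_bot, add_zero] at h3
      have h4 : Module.finrank ℝ ↥(LinearMap.ker f ⊔ Ψᗮ) ≤ n + d :=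
        le_trans (Submodule.finrank_le _) (le_of_eq hfE)
      rw [hfE]
      omega
    have hβ : (WithLp.toLp 2 β : EuclideanSpace ℝ (Fin (n + d))) ∈ LinearMap.ker f ⊔ Ψᗮ := by
      rw [hsup]; exact Submodule.mem_top
    obtain ⟨θ, hθ, w, hw, hsum⟩ := Submodule.mem_sup.1 hβ
    refine ⟨-w, ?_, ?_⟩
    · intro u hu
      have hwo : ∀ a : Fin (n + d) → ℝ, (WithLp.toLp 2 a : EuclideanSpace ℝ (Fin (n + d))) ∈ Ψ →
          a ⬝ᵥ (w : Fin (n + d) → ℝ) = 0 := by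
        intro a ha
        have h := (Submodule.mem_orthogonal Ψ w).1 hw _ ha
        simpa [PiLp.inner_apply, RCLike.inner_apply, dotProduct, mul_comm] using h
      induction hu using Submodule.span_induction with
      | mem a ha =>
        obtain ⟨p, rfl⟩ := ha
        have h0 := hwo _ (Submodule.subset_span ⟨p, rfl⟩)
        simp [neg_dotProduct, dotProduct_neg, h0]
      | zero => simp
      | add a b _ _ h1 h2 => rw [add_dotProduct, h1, h2, add_zero]
      | smul c a _ h1 => rw [smul_dotProduct, h1, smul_zero]
    · have hbeq : β + -w = (θ : Fin (n + d) → ℝ) := by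
        funext i
        have := congrArg (fun v : EuclideanSpace ℝ (Fin (n + d)) => v i) hsum
        simp only [Pi.add_apply, Pi.neg_apply]
        have h2 : (θ : Fin (n + d) → ℝ) i + w i = β i := by simpa using this
        linarith
      rw [hbeq]
      exact hθ
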